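/- arXiv:2603.19859 — 2 statements merged into one kernel-verified Lean document; each statement's English description precedes it below -/
import Mathlib

section
/- Under the same hypotheses, for any N₀ ∈ X and any solution N(t,s) = U(t,s)e^{-d(t-s)}N₀ + ∫_s^t U(t,r)e^{-d(t-r)}Λ dr, one has ‖N(t,s) - N*(t)‖ ≤ e^{-(λ₀+d)(t-s)}‖N₀ - N*(s)‖, so N(t,s) → N*(t) as t-s → ∞, both in the forward (t → ∞) and pullback (s → -∞) senses. -/
open MeasureTheory Filter Set Real

private lemma intOn_exp_mul_Iic {c : ℝ} (hc : 0 < c) (s : ℝ) :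
    IntegrableOn (fun r : ℝ => Real.exp (c * r)) (Set.Iic s) := by
  have h := exp_neg_integrableOn_Ioi (-s) hc
  rw [← (Measure.measurePreserving_neg (volume : Measure ℝ)).integrableOn_comp_preimage
      (Homeomorph.neg ℝ).measurableEmbedding] at h
  simp only [Function.comp_def, neg_preimage, neg_Ioi, neg_neg, mul_neg, neg_mul] at h
  rw [integrableOn_Iic_iff_integrableOn_Iio]
  convert h using 2 with r


private lemma int_exp_mul_Iic {c : ℝ} (hc : 0 < c) (s : ℝ) :
    (∫ r in Set.Iic s, Real.exp (c * r)) = Real.exp (c * s) / c := by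
  have h1 := integral_comp_neg_Iic s (fun x : ℝ => Real.exp (-(c * x)))
  simp only [mul_neg, neg_neg] at h1
  rw [h1]
  have h2 := integral_comp_mul_left_Ioi (fun x : ℝ => Real.exp (-x)) (-s) hc
  simp only [integral_exp_neg_Ioi, smul_eq_mul, mul_neg, neg_neg] at h2
  rw [h2, div_eq_inv_mul]

/-- Forward and pullback attraction of the disease-free solution `N*`:
`‖N(t,s) - N*(t)‖ ≤ e^{-(λ₀+d)(t-s)}‖N₀ - N*(s)‖`. -/
theorem disease_free_attracts {X : Type*} [NormedAddCommGroup X]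
    [NormedSpace ℝ X] [CompleteSpace X]
    (U : ℝ → ℝ → X →L[ℝ] X) (l₀ d : ℝ) (hl₀ : 0 < l₀) (hd : 0 < d)
    (hU : ∀ t s, s ≤ t → ‖U t s‖ ≤ Real.exp (-l₀ * (t - s)))
    (hid : ∀ t, U t t = ContinuousLinearMap.id ℝ X)
    (hcoc : ∀ t s τ, τ ≤ s → s ≤ t → (U t s).comp (U s τ) = U t τ)
    (hcont : ∀ t, Continuous fun s => U t s) (Λ : X) (N₀ : X)
    (Nstar : ℝ → X)
    (hNstar : ∀ t, Nstar t = ∫ r in Set.Iic t, Real.exp (-d * (t - r)) • U t r Λ)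
    (N : ℝ → ℝ → X)
    (hN : ∀ t s, N t s = Real.exp (-d * (t - s)) • U t s N₀ +
      ∫ r in s..t, Real.exp (-d * (t - r)) • U t r Λ) :
    (∀ t s, s ≤ t →
      ‖N t s - Nstar t‖ ≤ Real.exp (-(l₀ + d) * (t - s)) * ‖N₀ - Nstar s‖) ∧
    (∀ s, Tendsto (fun t => N t s - Nstar t) atTop (nhds 0)) ∧
    (∀ t, Tendsto (fun s => N t s - Nstar t) atBot (nhds 0)) := by
  set c : ℝ := l₀ + d with hc_def
  have hc : 0 < c := by positivity
  set f : ℝ → ℝ → X := fun t r => Real.exp (-d * (t - r)) • U t r Λ with hf_def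
  -- continuity
  have hfc : ∀ t, Continuous (f t) := by
    intro t
    apply Continuous.smul
    · exact Real.continuous_exp.comp (continuous_const.mul (continuous_const.sub continuous_id))
    · exact (ContinuousLinearMap.apply ℝ X Λ).continuous.comp (hcont t)
  -- pointwise bound
  have hfb : ∀ t r, r ≤ t → ‖f t r‖ ≤ Real.exp (-c * (t - r)) * ‖Λ‖ := by
    intro t r hrt
    rw [hf_def]
    simp only [norm_smul, Real.norm_eq_abs, abs_of_pos (Real.exp_pos _)]
    calc Real.exp (-d * (t - r)) * ‖(U t r) Λ‖
        ≤ Real.exp (-d * (t - r)) * (Real.exp (-l₀ * (t - r)) * ‖Λ‖) := by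
          apply mul_le_mul_of_nonneg_left _ (Real.exp_pos _).le
          exact le_trans ((U t r).le_opNorm Λ)
            (mul_le_mul_of_nonneg_right (hU t r hrt) (norm_nonneg _))
      _ = Real.exp (-c * (t - r)) * ‖Λ‖ := by
          rw [← mul_assoc, ← Real.exp_add]; congr 2; rw [hc_def]; ring
  -- integrability of dominating function
  have hgint : ∀ t, IntegrableOn (fun r => Real.exp (-c * (t - r)) * ‖Λ‖) (Set.Iic t) := by
    intro t
    have h := ((intOn_exp_mul_Iic hc t).const_mul (Real.exp (-c * t))).mul_const ‖Λ‖
    apply h.congr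
    filter_upwards with r
    rw [show -c * (t - r) = -c * t + c * r by ring, Real.exp_add]
  -- integrability of f t on Iic t
  have hfint : ∀ t, IntegrableOn (f t) (Set.Iic t) := by
    intro t
    apply Integrable.mono' (hgint t) ((hfc t).aestronglyMeasurable)
    filter_upwards [ae_restrict_mem measurableSet_Iic] with r hr
    exact hfb t r hr
  -- value of the dominating integral
  have hgval : ∀ t, (∫ r in Set.Iic t, Real.exp (-c * (t - r)) * ‖Λ‖) = ‖Λ‖ / c := by
    intro t
    rw [show (fun r => Real.exp (-c * (t - r)) * ‖Λ‖) =
        fun r => (Real.exp (-c * t) * ‖Λ‖) * Real.exp (c * r) by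
      ext r; rw [show -c * (t - r) = -c * t + c * r by ring, Real.exp_add]; ring]
    rw [integral_const_mul, int_exp_mul_Iic hc t, neg_mul]
    have hh : Real.exp (-(c * t)) * Real.exp (c * t) = 1 := by
      rw [← Real.exp_add]; simp
    field_simp
    linear_combination ‖Λ‖ * hh
  -- uniform bound on Nstar
  have hNb : ∀ s, ‖Nstar s‖ ≤ ‖Λ‖ / c := by
    intro s
    rw [hNstar s]
    calc ‖∫ r in Set.Iic s, Real.exp (-d * (s - r)) • U s r Λ‖
        ≤ ∫ r in Set.Iic s, Real.exp (-c * (s - r)) * ‖Λ‖ := by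
          apply norm_integral_le_of_norm_le (hgint s)
          filter_upwards [ae_restrict_mem measurableSet_Iic] with r hr
          exact hfb s r hr
      _ = ‖Λ‖ / c := hgval s
  -- key identity
  have hkey : ∀ t s, s ≤ t →
      N t s - Nstar t = Real.exp (-d * (t - s)) • (U t s) (N₀ - Nstar s) := by
    intro t s hst
    have h1 : IntegrableOn (f t) (Set.Iic t) := hfint t
    have h2 : IntegrableOn (f t) (Set.Iic s) := h1.mono_set (Iic_subset_Iic.mpr hst)
    have hsplit : (∫ r in s..t, f t r) =
        (∫ r in Set.Iic t, f t r) - ∫ r in Set.Iic s, f t r :=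
      (intervalIntegral.integral_Iic_sub_Iic h2 h1).symm
    have hpull : (∫ r in Set.Iic s, f t r)
        = Real.exp (-d * (t - s)) • (U t s) (Nstar s) := by
      have e1 : ∀ r ∈ Set.Iic s, f t r = Real.exp (-d * (t - s)) • (U t s) (f s r) := by
        intro r hr
        have hUU : (U t s) ((U s r) Λ) = (U t r) Λ := by
          rw [← hcoc t s r hr hst]; rfl
        show Real.exp (-d * (t - r)) • (U t r) Λ =
          Real.exp (-d * (t - s)) • (U t s) (Real.exp (-d * (s - r)) • (U s r) Λ)
        rw [(U t s).map_smul, smul_smul, hUU, ← Real.exp_add]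
        congr 2; ring
      rw [setIntegral_congr_fun measurableSet_Iic e1, integral_smul,
        ContinuousLinearMap.integral_comp_comm (U t s) (hfint s), ← hNstar s]
    rw [hN t s, hNstar t]
    have : (∫ r in s..t, Real.exp (-d * (t - r)) • U t r Λ) = ∫ r in s..t, f t r := rfl
    rw [this, hsplit]
    have : (∫ r in Set.Iic t, Real.exp (-d * (t - r)) • U t r Λ)
        = ∫ r in Set.Iic t, f t r := rfl
    rw [this, hpull, map_sub, smul_sub]
    abel
  -- main estimate
  have hmain : ∀ t s, s ≤ t →
      ‖N t s - Nstar t‖ ≤ Real.exp (-c * (t - s)) * ‖N₀ - Nstar s‖ := by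
    intro t s hst
    rw [hkey t s hst, norm_smul, Real.norm_eq_abs, abs_of_pos (Real.exp_pos _)]
    calc Real.exp (-d * (t - s)) * ‖(U t s) (N₀ - Nstar s)‖
        ≤ Real.exp (-d * (t - s)) * (Real.exp (-l₀ * (t - s)) * ‖N₀ - Nstar s‖) := by
          apply mul_le_mul_of_nonneg_left _ (Real.exp_pos _).le
          exact le_trans ((U t s).le_opNorm _)
            (mul_le_mul_of_nonneg_right (hU t s hst) (norm_nonneg _))
      _ = Real.exp (-c * (t - s)) * ‖N₀ - Nstar s‖ := by
          rw [← mul_assoc, ← Real.exp_add]; congr 2; rw [hc_def]; ring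
  refine ⟨hmain, ?_, ?_⟩
  · -- forward attraction
    intro s
    apply squeeze_zero_norm' (a := fun t => Real.exp (-c * (t - s)) * ‖N₀ - Nstar s‖)
    · filter_upwards [eventually_ge_atTop s] with t ht using hmain t s ht
    · rw [show (0 : ℝ) = 0 * ‖N₀ - Nstar s‖ by ring]
      apply Tendsto.mul_const
      apply Real.tendsto_exp_atBot.comp
      apply Tendsto.const_mul_atTop_of_neg (by linarith : -c < 0)
      simpa [sub_eq_add_neg] using tendsto_atTop_add_const_right atTop (-s)
        (tendsto_id (α := ℝ))
  · -- pullback attraction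
    intro t
    apply squeeze_zero_norm' (a := fun s => Real.exp (-c * (t - s)) * (‖N₀‖ + ‖Λ‖ / c))
    · filter_upwards [eventually_le_atBot t] with s hs
      refine (hmain t s hs).trans ?_
      apply mul_le_mul_of_nonneg_left _ (Real.exp_pos _).le
      exact (norm_sub_le _ _).trans (add_le_add le_rfl (hNb s))
    · rw [show (0 : ℝ) = 0 * (‖N₀‖ + ‖Λ‖ / c) by ring]
      apply Tendsto.mul_const
      apply Real.tendsto_exp_atBot.comp
      apply Tendsto.const_mul_atTop_of_neg (by linarith : -c < 0)
      exact (tendsto_atTop_add_const_left atBot t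
        tendsto_neg_atBot_atTop).congr (fun x => (sub_eq_add_neg t x).symm)
end

section
/- Let λ₀, d, b, c > 0 and γ : ℝ → [0, Γ] bounded continuous with mean value m := limsup over t-t₀→∞ of (1/(t-t₀))∫_{t₀}^t γ < λ₀+d+b+c. If I : [t₀,∞) → [0,∞) satisfies I(t) ≤ e^{-(λ₀+d+b+c)(t-t₀)+∫_{t₀}^t γ(r)dr} I(t₀), then sup over t₀ of I(t,t₀) → 0 as t - t₀ → ∞; i.e., the decay is uniform in t₀ for t - t₀ large. -/
open MeasureTheory intervalIntegral Filter

/-- Uniform (in `t₀`) eradication: if the mean transmission value `m` satisfies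
`m < l₀+d+b+c` and the infected population obeys the Grönwall bound with uniformly
bounded initial data, then `I(t,t₀) → 0` uniformly in `t₀` as `t - t₀ → ∞`. -/
theorem infected_uniform_decay (l₀ d b c Γ : ℝ) (hl : 0 < l₀) (hd : 0 < d)
    (hb : 0 < b) (hc : 0 < c) (γ : ℝ → ℝ) (hγc : Continuous γ)
    (hγ : ∀ r, γ r ∈ Set.Icc 0 Γ) (m : ℝ)
    (hm : Tendsto (fun n : ℕ => sSup {x : ℝ | ∃ t₀ t : ℝ, t - t₀ > (n : ℝ) ∧
        x = (1 / (t - t₀)) * ∫ r in t₀..t, γ r}) atTop (nhds m))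
    (hm2 : m < l₀ + d + b + c)
    (I : ℝ → ℝ → ℝ) (hI0 : ∀ t t₀, 0 ≤ I t t₀)
    (C : ℝ) (hC : ∀ t₀, I t₀ t₀ ≤ C)
    (hIb : ∀ t₀ t, t₀ ≤ t → I t t₀ ≤
      Real.exp (-(l₀ + d + b + c) * (t - t₀) + ∫ r in t₀..t, γ r) * I t₀ t₀) :
    ∀ ε > 0, ∃ T > 0, ∀ t₀ t : ℝ, t - t₀ > T → I t t₀ < ε := by
  intro ε hε
  set L := l₀ + d + b + c with hL
  set δ := (L - m) / 2 with hδdef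
  have hδ : 0 < δ := by simp only [hδdef]; linarith
  have hC0 : 0 ≤ C := le_trans (hI0 0 0) (hC 0)
  -- pick n with sSup S n < m + δ
  obtain ⟨n, hn⟩ := (hm.eventually (gt_mem_nhds (show m < m + δ by linarith))).exists
  -- boundedness of averages
  have hbdd : BddAbove {x : ℝ | ∃ t₀ t : ℝ, t - t₀ > (n : ℝ) ∧
      x = (1 / (t - t₀)) * ∫ r in t₀..t, γ r} := by
    refine ⟨Γ, ?_⟩
    rintro x ⟨t₀, t, ht, rfl⟩
    have hpos : 0 < t - t₀ := lt_of_le_of_lt (Nat.cast_nonneg n) ht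
    have hle : (∫ r in t₀..t, γ r) ≤ (t - t₀) * Γ := by
      calc (∫ r in t₀..t, γ r) ≤ ∫ _ in t₀..t, Γ :=
            intervalIntegral.integral_mono_on (by linarith)
              (hγc.intervalIntegrable _ _) intervalIntegrable_const
              (fun r _ => (hγ r).2)
        _ = (t - t₀) * Γ := by simp [smul_eq_mul]
    rw [div_mul_eq_mul_div, one_mul, div_le_iff₀ hpos]
    linarith [hle]
  -- the key exponential bound for t - t₀ > n
  have key : ∀ t₀ t : ℝ, t - t₀ > (n : ℝ) →
      I t t₀ ≤ Real.exp (-δ * (t - t₀)) * C := by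
    intro t₀ t ht
    have hpos : 0 < t - t₀ := lt_of_le_of_lt (Nat.cast_nonneg n) ht
    have hmem : ((1 / (t - t₀)) * ∫ r in t₀..t, γ r) ∈
        {x : ℝ | ∃ t₀ t : ℝ, t - t₀ > (n : ℝ) ∧
          x = (1 / (t - t₀)) * ∫ r in t₀..t, γ r} := ⟨t₀, t, ht, rfl⟩
    have havg : (1 / (t - t₀)) * ∫ r in t₀..t, γ r < m + δ :=
      lt_of_le_of_lt (le_csSup hbdd hmem) hn
    have hint : (∫ r in t₀..t, γ r) < (m + δ) * (t - t₀) := by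
      have := mul_lt_mul_of_pos_right havg hpos
      rwa [div_mul_eq_mul_div, one_mul, div_mul_cancel₀ _ hpos.ne'] at this
    have hexp : -(L) * (t - t₀) + (∫ r in t₀..t, γ r) ≤ -δ * (t - t₀) := by
      nlinarith [hint, hpos]
    calc I t t₀ ≤ Real.exp (-(L) * (t - t₀) + ∫ r in t₀..t, γ r) * I t₀ t₀ :=
          hIb t₀ t (by linarith)
      _ ≤ Real.exp (-δ * (t - t₀)) * C := by
          apply mul_le_mul (Real.exp_le_exp.mpr hexp) (hC t₀) (hI0 t₀ t₀)
            (Real.exp_pos _).le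
  -- choose T
  refine ⟨max ((n : ℝ) + 1) (Real.log ((C + 1) / ε) / δ + 1),
    lt_of_lt_of_le (by positivity) (le_max_left _ _), ?_⟩
  intro t₀ t ht
  have ht1 : t - t₀ > (n : ℝ) := by
    have := le_max_left ((n : ℝ) + 1) (Real.log ((C + 1) / ε) / δ + 1)
    linarith
  have ht2 : t - t₀ > Real.log ((C + 1) / ε) / δ := by
    have := le_max_right ((n : ℝ) + 1) (Real.log ((C + 1) / ε) / δ + 1)
    linarith
  have h1 : I t t₀ ≤ Real.exp (-δ * (t - t₀)) * C := key t₀ t ht1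
  have h2 : Real.exp (-δ * (t - t₀)) * C < Real.exp (-δ * (t - t₀)) * (C + 1) := by
    have := Real.exp_pos (-δ * (t - t₀))
    nlinarith
  have h3 : Real.exp (-δ * (t - t₀)) * (C + 1) ≤ ε := by
    have hpos : 0 < (C + 1) / ε := by positivity
    have : -δ * (t - t₀) ≤ Real.log (ε / (C + 1)) := by
      rw [Real.log_div hε.ne' (by linarith : C + 1 ≠ 0)]
      have hll : Real.log ((C + 1) / ε) < δ * (t - t₀) :=
        (div_lt_iff₀' hδ).mp ht2
      rw [Real.log_div (by linarith : C + 1 ≠ 0) hε.ne'] at hll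
      linarith
    calc Real.exp (-δ * (t - t₀)) * (C + 1)
        ≤ Real.exp (Real.log (ε / (C + 1))) * (C + 1) := by
          apply mul_le_mul_of_nonneg_right (Real.exp_le_exp.mpr this) (by linarith)
      _ = ε := by
          rw [Real.exp_log (by positivity)]
          field_simp
  linarith
end
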